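/- Let y be a truncated multi-sequence of degree 2ℓ in n variables with y_0 = 1 (the entry at the zero multi-index), and suppose the moment matrix M_ℓ[y] is positive semidefinite of rank 1. Define u ∈ ℝⁿ by u_i := y_{e_i}, where e_i is the i-th standard unit multi-index. Then y is the evaluation tms of u: y_α = u^α = u₁^{α₁}⋯u_n^{αₙ} for every α with |α| ≤ 2ℓ. -/

import Mathlib

open MvPolynomial

/-- Multi-indices `α ∈ ℕⁿ` with `|α| ≤ d`, indexing the monomial vector `[x]_d`. -/
abbrev MIdx (n d : ℕ) := {α : Fin n → Fin (d + 1) // ∑ i, (α i : ℕ) ≤ d}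

/-- The `d`-th moment matrix of a truncated multi-sequence `y`,
with entries `(M_d[y])_{α,β} = y_{α+β}`. -/
noncomputable def momentMatrix {n : ℕ} (d : ℕ) (y : (Fin n → ℕ) → ℝ) :
    Matrix (MIdx n d) (MIdx n d) ℝ :=
  Matrix.of fun α β => y fun i => (α.1 i : ℕ) + (β.1 i : ℕ)

/-- `ℓ_g = ⌈(2ℓ − deg g)/2⌉`, the truncation degree of the localizing matrix of `g`. -/
def locDeg {n : ℕ} (ℓ : ℕ) (g : MvPolynomial (Fin n) ℝ) : ℕ :=
  (2 * ℓ - g.totalDegree + 1) / 2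

/-- The `ℓ`-th localizing matrix of `g` generated by `y`,
with entries `Σ_γ g_γ y_{α+β+γ}` for `|α|, |β| ≤ ℓ_g`. -/
noncomputable def locMatrix {n : ℕ} (ℓ : ℕ) (g : MvPolynomial (Fin n) ℝ)
    (y : (Fin n → ℕ) → ℝ) :
    Matrix (MIdx n (locDeg ℓ g)) (MIdx n (locDeg ℓ g)) ℝ :=
  Matrix.of fun α β =>
    ∑ γ ∈ g.support, g.coeff γ * y fun i => (α.1 i : ℕ) + (β.1 i : ℕ) + γ i

/-- The Riesz functional of `y` applied to a polynomial `p`: `L_y(p) = Σ_α p_α y_α`. -/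
noncomputable def riesz {n : ℕ} (y : (Fin n → ℕ) → ℝ) (p : MvPolynomial (Fin n) ℝ) : ℝ :=
  ∑ γ ∈ p.support, p.coeff γ * y fun i => γ i

/-- The evaluation truncated multi-sequence of a point `u`: `y_α = u^α`. -/
noncomputable def evalTms {n : ℕ} (u : Fin n → ℝ) : (Fin n → ℕ) → ℝ :=
  fun α => ∏ i, u i ^ α i

/-- The monomial vector `[u]_d` of all monomials `u^α` with `|α| ≤ d`. -/
noncomputable def monVec {n : ℕ} (d : ℕ) (u : Fin n → ℝ) : MIdx n d → ℝ :=
  fun α => ∏ i, u i ^ (α.1 i : ℕ)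

theorem exists_le_sum_eq {n : ℕ} (α : Fin n → ℕ) :
    ∀ m, m ≤ ∑ i, α i → ∃ β : Fin n → ℕ, (∀ i, β i ≤ α i) ∧ ∑ i, β i = m := by
  intro m
  induction m with
  | zero => exact fun _ => ⟨0, fun i => Nat.zero_le _, by simp⟩
  | succ m ih =>
    intro h
    obtain ⟨β, hle, hsum⟩ := ih (Nat.le_of_succ_le h)
    have hex : ∃ i, β i < α i := by
      by_contra hc
      push_neg at hc
      have : ∑ i, α i ≤ ∑ i, β i := Finset.sum_le_sum fun i _ => hc i
      omega
    obtain ⟨i, hi⟩ := hex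
    refine ⟨Function.update β i (β i + 1), fun j => ?_, ?_⟩
    · rcases eq_or_ne j i with rfl | hj
      · simp; omega
      · simp [Function.update_of_ne hj, hle j]
    · rw [Finset.sum_update_of_mem (Finset.mem_univ i)]
      have h2 : ∑ j, β j = β i + ∑ j ∈ Finset.univ.erase i, β j :=
        (Finset.add_sum_erase _ β (Finset.mem_univ i)).symm
      rw [Finset.erase_eq] at h2
      omega

/-- if `y₀ = 1` and the moment matrix `M_ℓ[y]` is PSD of rank 1,
then `y` is the evaluation tms of the point `u` with `uᵢ = y_{eᵢ}`:
`y_α = u^α` for all `|α| ≤ 2ℓ`. -/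
theorem rank_one_moment_matrix_is_evaluation {n ℓ : ℕ} (y : (Fin n → ℕ) → ℝ)
    (h0 : y 0 = 1) (hpsd : (momentMatrix ℓ y).PosSemidef)
    (hrank : (momentMatrix ℓ y).rank = 1) :
    ∀ α : Fin n → ℕ, ∑ i, α i ≤ 2 * ℓ →
      y α = ∏ i, y (Pi.single i 1) ^ α i := by
  classical
  set M := momentMatrix ℓ y with hMdef
  set z : MIdx n ℓ := ⟨fun _ => 0, by simp⟩ with hzdef
  -- lifting to MIdx
  have lift : ∀ a : Fin n → ℕ, ∑ i, a i ≤ ℓ → ∃ A : MIdx n ℓ, ∀ i, (A.1 i : ℕ) = a i := by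
    intro a ha
    have hlt : ∀ i, a i < ℓ + 1 := fun i =>
      Nat.lt_succ_of_le (le_trans
        (Finset.single_le_sum (f := a) (fun j _ => Nat.zero_le _) (Finset.mem_univ i)) ha)
    exact ⟨⟨fun i => ⟨a i, hlt i⟩, by simpa using ha⟩, fun i => rfl⟩
  have hMzz : M z z = 1 := by
    have : (fun i => ((z.1 i : ℕ)) + ((z.1 i : ℕ))) = (0 : Fin n → ℕ) := by
      funext i; simp [hzdef]
    simp only [hMdef, momentMatrix, Matrix.of_apply, this, h0]
  -- rank-1 factorization through column z
  have key : ∀ A B : MIdx n ℓ, M A B = M A z * M z B := by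
    intro A B
    have hfr : Module.finrank ℝ ↥(LinearMap.range M.mulVecLin) = 1 := hrank
    have memcol : ∀ C : MIdx n ℓ, M.mulVec (Pi.single C 1) ∈ LinearMap.range M.mulVecLin :=
      fun C => ⟨Pi.single C 1, rfl⟩
    set c0 : ↥(LinearMap.range M.mulVecLin) := ⟨M.mulVec (Pi.single z 1), memcol z⟩ with hc0
    have hc0ne : c0 ≠ 0 := by
      intro hcontra
      have := congrArg (fun v : ↥(LinearMap.range M.mulVecLin) => v.1 z) hcontra
      simp only [hc0, Matrix.mulVec_single, MulOpposite.op_one, one_smul, Matrix.col_apply, mul_one] at this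
      rw [hMzz] at this
      simpa using this
    obtain ⟨c, hc⟩ := (finrank_eq_one_iff_of_nonzero' c0 hc0ne).mp hfr
      ⟨M.mulVec (Pi.single B 1), memcol B⟩
    have hcv : ∀ A' : MIdx n ℓ, c * M A' z = M A' B := by
      intro A'
      have := congrArg (fun v : ↥(LinearMap.range M.mulVecLin) => v.1 A') hc
      simpa [hc0, Matrix.mulVec_single] using this
    have hcval : c = M z B := by
      have := hcv z
      rw [hMzz] at this
      simpa using this
    rw [← hcv A, hcval, mul_comm]
  -- multiplicativity
  have mul : ∀ a b : Fin n → ℕ, ∑ i, a i ≤ ℓ → ∑ i, b i ≤ ℓ →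
      y (fun i => a i + b i) = y a * y b := by
    intro a b ha hb
    obtain ⟨A, hA⟩ := lift a ha
    obtain ⟨B, hB⟩ := lift b hb
    have h1 := key A B
    have e1 : (fun i => ((A.1 i : ℕ)) + ((B.1 i : ℕ))) = fun i => a i + b i := by
      funext i; rw [hA, hB]
    have e2 : (fun i => ((A.1 i : ℕ)) + ((z.1 i : ℕ))) = a := by
      funext i; simp [hA, hzdef]
    have e3 : (fun i => ((z.1 i : ℕ)) + ((B.1 i : ℕ))) = b := by
      funext i; simp [hB, hzdef]
    simpa only [hMdef, momentMatrix, Matrix.of_apply, e1, e2, e3] using h1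
  -- base case: |a| ≤ ℓ
  have base : ∀ k, ∀ a : Fin n → ℕ, ∑ i, a i = k → k ≤ ℓ →
      y a = ∏ i, y (Pi.single i 1) ^ a i := by
    intro k
    induction k with
    | zero =>
      intro a hs _
      have ha : a = 0 := by
        funext i
        exact Finset.sum_eq_zero_iff.mp hs i (Finset.mem_univ i)
      subst ha
      simp [h0]
    | succ k ih =>
      intro a hs hk
      have hex : ∃ i, 0 < a i := by
        by_contra hc
        push_neg at hc
        have : ∑ i, a i = 0 := Finset.sum_eq_zero fun i _ => Nat.le_zero.mp (hc i)
        omega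
      obtain ⟨i, hi⟩ := hex
      set a' : Fin n → ℕ := Function.update a i (a i - 1) with ha'
      have hsum' : ∑ j, a' j = k := by
        rw [ha', Finset.sum_update_of_mem (Finset.mem_univ i)]
        have h2 : ∑ j, a j = a i + ∑ j ∈ Finset.univ.erase i, a j :=
          (Finset.add_sum_erase _ a (Finset.mem_univ i)).symm
        rw [Finset.erase_eq] at h2
        omega
      have haeq : a = fun j => a' j + (Pi.single i 1 : Fin n → ℕ) j := by
        funext j
        rcases eq_or_ne j i with rfl | hj
        · simp [ha']; omega
        · simp [ha', Function.update_of_ne hj, Pi.single_eq_of_ne hj]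
      have hsingle : ∑ j, (Pi.single i 1 : Fin n → ℕ) j = 1 := by
        simp [Finset.sum_pi_single']
      rw [haeq, mul a' (Pi.single i 1) (by omega) (by rw [hsingle]; omega)]
      rw [ih a' hsum' (by omega)]
      have hprod : ∏ j, y (Pi.single j 1) ^ Pi.single i 1 j = y (Pi.single i 1) := by
        rw [Finset.prod_eq_single i]
        · simp
        · intro j _ hj; rw [Pi.single_eq_of_ne hj, pow_zero]
        · intro h; exact absurd (Finset.mem_univ i) h
      rw [← hprod, ← Finset.prod_mul_distrib]
      congr 1
      funext j
      rw [pow_add]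
  -- final splitting
  intro α hα
  obtain ⟨β, hβle, hβsum⟩ := exists_le_sum_eq α (∑ i, α i - ℓ) (Nat.sub_le _ _)
  set γ : Fin n → ℕ := fun i => α i - β i with hγ
  have hγsum : ∑ i, γ i = ∑ i, α i - (∑ i, α i - ℓ) := by
    rw [hγ, Finset.sum_tsub_distrib _ (fun i _ => hβle i), hβsum]
  have hαeq : α = fun i => β i + γ i := by
    funext i; have := hβle i; simp only [hγ]; omega
  rw [hαeq, mul β γ (by omega) (by omega),
    base _ β rfl (by omega), base _ γ rfl (by omega), ← Finset.prod_mul_distrib]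
  congr 1
  funext j
  rw [pow_add]
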